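/- Let M be a random variable with the Poisson distribution of parameter λ > 0. Then E[ |√M − √λ| ] ≤ 1. -/

import Mathlib

open MeasureTheory ProbabilityTheory

lemma exp_hasSum (lam : ℝ) : HasSum (fun k : ℕ => lam ^ k / (Nat.factorial k : ℝ)) (Real.exp lam) := by
  rw [Real.exp_eq_exp_ℝ]
  exact NormedSpace.expSeries_div_hasSum_exp lam

lemma moment1_hasSum (lam : ℝ) :
    HasSum (fun k : ℕ => (k : ℝ) * lam ^ k / (Nat.factorial k : ℝ)) (lam * Real.exp lam) := by
  have h : HasSum (fun k : ℕ => ((k + 1 : ℕ) : ℝ) * lam ^ (k + 1) / (Nat.factorial (k + 1) : ℝ))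
      (lam * Real.exp lam) := by
    have h0 := (exp_hasSum lam).mul_left lam
    convert h0 using 2 with k
    · rfl
    have hk : ((k : ℝ) + 1) ≠ 0 := by positivity
    have hf : (Nat.factorial k : ℝ) ≠ 0 := by positivity
    rw [Nat.factorial_succ]
    push_cast
    rw [pow_succ]
    field_simp
  have := (hasSum_nat_add_iff (f := fun k : ℕ => (k : ℝ) * lam ^ k / (Nat.factorial k : ℝ)) 1).1 h
  simpa using this

lemma moment2_hasSum (lam : ℝ) :
    HasSum (fun k : ℕ => (k : ℝ) ^ 2 * lam ^ k / (Nat.factorial k : ℝ))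
      ((lam ^ 2 + lam) * Real.exp lam) := by
  have h : HasSum (fun k : ℕ => ((k + 1 : ℕ) : ℝ) ^ 2 * lam ^ (k + 1) / (Nat.factorial (k + 1) : ℝ))
      ((lam ^ 2 + lam) * Real.exp lam) := by
    have h0 := ((moment1_hasSum lam).add (exp_hasSum lam)).mul_left lam
    convert h0 using 1
    · rfl
    · funext k
      have hk : ((k : ℝ) + 1) ≠ 0 := by positivity
      have hf : (Nat.factorial k : ℝ) ≠ 0 := by positivity
      rw [Nat.factorial_succ]
      push_cast
      rw [pow_succ]
      field_simp
      ring
    · ring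
  have := (hasSum_nat_add_iff (f := fun k : ℕ => (k : ℝ) ^ 2 * lam ^ k / (Nat.factorial k : ℝ)) 1).1 h
  simpa using this

lemma var_hasSum (lam : ℝ) :
    HasSum (fun k : ℕ => ((k : ℝ) - lam) ^ 2 * lam ^ k / (Nat.factorial k : ℝ))
      (lam * Real.exp lam) := by
  have h := ((moment2_hasSum lam).sub ((moment1_hasSum lam).mul_left (2 * lam))).add
    ((exp_hasSum lam).mul_left (lam ^ 2))
  convert h using 1
  · rfl
  · funext k
    ring
  · ring

/-- If `M` is Poisson with parameter `λ > 0`, then `E[|√M − √λ|] ≤ 1`. -/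
theorem stmt6 {Ω : Type} [MeasurableSpace Ω] (P : Measure Ω) [IsProbabilityMeasure P]
    (M : Ω → ℕ) (hM : Measurable M) (lam : ℝ) (hlam : 0 < lam)
    (hpois : ∀ k : ℕ, P {ω | M ω = k}
      = ENNReal.ofReal (Real.exp (-lam) * lam ^ k / (Nat.factorial k))) :
    ∫⁻ ω, ENNReal.ofReal |Real.sqrt (M ω) - Real.sqrt lam| ∂P ≤ 1 := by
  set μ := P.map M with hμ
  have hprob : IsProbabilityMeasure μ := Measure.isProbabilityMeasure_map hM.aemeasurable
  have hsing : ∀ k : ℕ, μ {k} = ENNReal.ofReal (Real.exp (-lam) * lam ^ k / (Nat.factorial k)) := by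
    intro k
    rw [hμ, Measure.map_apply hM (measurableSet_singleton k), ← hpois k]
    congr 1
  set f : ℕ → ENNReal := fun k => ENNReal.ofReal |Real.sqrt k - Real.sqrt lam| with hf
  have hrw : ∫⁻ ω, ENNReal.ofReal |Real.sqrt (M ω) - Real.sqrt lam| ∂P = ∫⁻ k, f k ∂μ := by
    rw [hμ, lintegral_map (measurable_from_top) hM]
  rw [hrw]
  -- second moment bound
  have hsq : ∫⁻ k, f k ^ (2:ℝ) ∂μ ≤ 1 := by
    have hle : ∀ k : ℕ, f k ^ (2:ℝ) ≤ ENNReal.ofReal (((k:ℝ) - lam) ^ 2 / lam) := by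
      intro k
      show ENNReal.ofReal |Real.sqrt k - Real.sqrt lam| ^ (2:ℝ) ≤ _
      rw [ENNReal.ofReal_rpow_of_nonneg (abs_nonneg _) (by norm_num)]
      apply ENNReal.ofReal_le_ofReal
      rw [Real.rpow_two, sq_abs, le_div_iff₀ hlam]
      have ha : (0:ℝ) ≤ Real.sqrt k := Real.sqrt_nonneg _
      have hb : (0:ℝ) ≤ Real.sqrt lam := Real.sqrt_nonneg _
      have ha2 : Real.sqrt k ^ 2 = (k : ℝ) := Real.sq_sqrt (Nat.cast_nonneg k)
      have hb2 : Real.sqrt lam ^ 2 = lam := Real.sq_sqrt hlam.le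
      nlinarith [sq_nonneg ((Real.sqrt k - Real.sqrt lam) * Real.sqrt k),
        mul_nonneg (mul_nonneg ha hb) (sq_nonneg (Real.sqrt k - Real.sqrt lam)),
        sq_nonneg (Real.sqrt k - Real.sqrt lam)]
    have hval : HasSum (fun k : ℕ =>
        (((k:ℝ) - lam) ^ 2 / lam) * (Real.exp (-lam) * lam ^ k / (Nat.factorial k))) 1 := by
      have h := (var_hasSum lam).mul_left (Real.exp (-lam) / lam)
      convert h using 1
      · rfl
      · funext k
        field_simp
      · rw [Real.exp_neg]
        field_simp
    calc ∫⁻ k, f k ^ (2:ℝ) ∂μ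
        ≤ ∫⁻ k, ENNReal.ofReal (((k:ℝ) - lam) ^ 2 / lam) ∂μ := lintegral_mono hle
      _ = ∑' k : ℕ, ENNReal.ofReal (((k:ℝ) - lam) ^ 2 / lam) * μ {k} := lintegral_countable' _
      _ = ∑' k : ℕ, ENNReal.ofReal
            ((((k:ℝ) - lam) ^ 2 / lam) * (Real.exp (-lam) * lam ^ k / (Nat.factorial k))) := by
          congr 1
          funext k
          rw [hsing k, ← ENNReal.ofReal_mul (by positivity)]
      _ = ENNReal.ofReal (∑' k : ℕ,
            (((k:ℝ) - lam) ^ 2 / lam) * (Real.exp (-lam) * lam ^ k / (Nat.factorial k))) := by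
          rw [ENNReal.ofReal_tsum_of_nonneg (fun k => by positivity) hval.summable]
      _ = 1 := by rw [hval.tsum_eq, ENNReal.ofReal_one]
  -- Cauchy-Schwarz
  have hpq : (2:ℝ).HolderConjugate 2 := Real.HolderConjugate.two_two
  have hCS := ENNReal.lintegral_mul_le_Lp_mul_Lq μ hpq
    (measurable_from_top (f := f)).aemeasurable (aemeasurable_const (b := (1:ENNReal)))
  simp only [Pi.mul_apply, Pi.one_apply, mul_one, ENNReal.one_rpow, lintegral_one,
    measure_univ] at hCS
  calc ∫⁻ k, f k ∂μ ≤ (∫⁻ k, f k ^ (2:ℝ) ∂μ) ^ (1/2 : ℝ) := by simpa using hCS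
    _ ≤ (1 : ENNReal) ^ (1/2 : ℝ) := ENNReal.rpow_le_rpow hsq (by norm_num)
    _ = 1 := ENNReal.one_rpow _
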